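/- Let T be a finite abelian group, π : F → T a surjection from a finitely generated free abelian group F, and h : T → T an automorphism. Then there exists an endomorphism f : F → F with π ∘ f = h ∘ π and gcd(det f, |T|) = 1. -/

import Mathlib

lemma aux_coprime_part (D N : ℕ) (hN : N ≠ 0) :
    ∃ m : ℕ, Nat.Coprime D m ∧ ∀ p : ℕ, p.Prime → p ∣ N → ¬ p ∣ D → p ∣ m := by
  set g : ℕ := N.gcd (D ^ N) with hg
  have hgN : g ∣ N := Nat.gcd_dvd_left _ _
  refine ⟨N / g, ?_, ?_⟩
  · rw [Nat.coprime_comm, Nat.coprime_iff_gcd_eq_one]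
    by_contra hne
    obtain ⟨p, hp, hpd⟩ := Nat.exists_prime_and_dvd hne
    have hpm : p ∣ N / g := hpd.trans (Nat.gcd_dvd_left _ _)
    have hpD : p ∣ D := hpd.trans (Nat.gcd_dvd_right _ _)
    have hvN : N.factorization p < N := Nat.factorization_lt p hN
    have h1 : p ^ N.factorization p ∣ D ^ N :=
      calc p ^ N.factorization p ∣ p ^ N := pow_dvd_pow p hvN.le
        _ ∣ D ^ N := pow_dvd_pow_of_dvd hpD N
    have h2 : p ^ N.factorization p ∣ g := Nat.dvd_gcd (Nat.ordProj_dvd N p) h1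
    have h3 : p ^ (N.factorization p + 1) ∣ N := by
      have := mul_dvd_mul h2 hpm
      rwa [Nat.mul_div_cancel' hgN, ← pow_succ] at this
    exact Nat.pow_succ_factorization_not_dvd hN hp h3
  · intro p hp hpN hpD
    have hpg : ¬ p ∣ g := fun hc =>
      hpD (hp.dvd_of_dvd_pow (hc.trans (Nat.gcd_dvd_right _ _)))
    have : p ∣ (N / g) * g := by rw [Nat.div_mul_cancel hgN]; exact hpN
    rcases (Nat.Prime.dvd_mul hp).mp this with h | h
    · exact h
    · exact absurd h hpg

lemma aux_smith (n : ℕ) (K : Submodule ℤ (Fin n → ℤ)) :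
    ∃ (b : Module.Basis (Fin n) ℤ (Fin n → ℤ)) (d : Fin n → ℤ),
      K = Submodule.span ℤ (Set.range fun i => d i • b i) := by
  classical
  obtain ⟨n', snf⟩ := Submodule.smithNormalForm (Pi.basisFun ℤ (Fin n)) K
  obtain ⟨bM, bK, femb, a, hsnf⟩ := snf
  refine ⟨bM, fun i => if h : ∃ j, femb j = i then a h.choose else 0, ?_⟩
  have hKspan : K = Submodule.span ℤ (Set.range fun j => a j • bM (femb j)) := by
    have h1 : Submodule.span ℤ (Set.range bK) = (⊤ : Submodule ℤ K) := bK.span_eq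
    have h2 := congrArg (Submodule.map K.subtype) h1
    rw [Submodule.map_span, Submodule.map_subtype_top] at h2
    rw [← h2]
    congr 1
    rw [← Set.range_comp]
    exact congrArg _ (funext fun j => hsnf j)
  rw [hKspan]
  apply le_antisymm
  · rw [Submodule.span_le]
    rintro x ⟨j, rfl⟩
    have hj : ∃ j', femb j' = femb j := ⟨j, rfl⟩
    have hcj : hj.choose = j := femb.injective hj.choose_spec
    apply Submodule.subset_span
    refine ⟨femb j, ?_⟩
    simp only [dif_pos hj, hcj, hj.choose_spec]
  · rw [Submodule.span_le]
    rintro x ⟨i, rfl⟩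
    by_cases h : ∃ j, femb j = i
    · simp only [dif_pos h]
      apply Submodule.subset_span
      exact ⟨h.choose, by simp only []; rw [h.choose_spec]⟩
    · simp only [dif_neg h, zero_smul]
      exact Submodule.zero_mem _

lemma aux_mem (n : ℕ) (b : Module.Basis (Fin n) ℤ (Fin n → ℤ)) (d : Fin n → ℤ)
    (x : Fin n → ℤ) :
    x ∈ Submodule.span ℤ (Set.range fun i => d i • b i) ↔ ∀ i, d i ∣ b.repr x i := by
  classical
  rw [Submodule.mem_span_range_iff_exists_fun]
  constructor
  · rintro ⟨c, rfl⟩ i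
    refine ⟨c i, ?_⟩
    rw [map_sum]
    simp only [smul_smul, LinearEquiv.map_smul, Module.Basis.repr_self]
    rw [Finsupp.finset_sum_apply]
    rw [Finset.sum_eq_single i]
    · simp [mul_comm]
    · intro j _ hj
      simp [Finsupp.single_apply, hj]
    · simp
  · intro hd
    choose c hc using hd
    refine ⟨c, ?_⟩
    have key : ∀ i, c i • d i • b i = (b.repr x i) • b i := by
      intro i
      rw [smul_smul, mul_comm, ← hc i]
    calc ∑ i, c i • d i • b i = ∑ i, (b.repr x i) • b i :=
          Finset.sum_congr rfl fun i _ => key i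
      _ = x := b.sum_repr x

/-- Let `T` be a finite abelian group, `π : F → T` a surjection from the
finitely generated free abelian group `F = Fin n → ℤ`, and `h : T → T` an automorphism.  Then
there is an endomorphism `f` of `F` lifting `h` (i.e. `π ∘ f = h ∘ π`) whose determinant is
coprime to `|T|`. -/
theorem stmt_3 (n : ℕ) (T : Type) [AddCommGroup T] [Fintype T]
    (π : (Fin n → ℤ) →+ T) (hπ : Function.Surjective π)
    (h : T ≃+ T) :
    ∃ f : (Fin n → ℤ) →ₗ[ℤ] (Fin n → ℤ),
      (∀ v, π (f v) = h (π v)) ∧ IsCoprime (LinearMap.det f) (Fintype.card T : ℤ) := by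
  classical
  set N : ℕ := Fintype.card T with hNdef
  have hN0 : N ≠ 0 := Fintype.card_ne_zero
  set πl : (Fin n → ℤ) →ₗ[ℤ] T := π.toIntLinearMap with hπldef
  set K : Submodule ℤ (Fin n → ℤ) := LinearMap.ker πl with hKdef
  obtain ⟨b, d, hKspan⟩ := aux_smith n K
  have hmem : ∀ x, x ∈ K ↔ ∀ i, d i ∣ b.repr x i := by
    intro x; rw [hKspan]; exact aux_mem n b d x
  have hKzero : ∀ x, x ∈ K ↔ π x = 0 := fun x => Iff.rfl
  -- a section of π
  set σ : T → (Fin n → ℤ) := Function.surjInv hπ with hσdef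
  have hσ : ∀ t, π (σ t) = t := Function.surjInv_eq hπ
  -- lifting lemma
  have lift_aux : ∀ (φ : T →+ T) (L : (Fin n → ℤ) →ₗ[ℤ] (Fin n → ℤ)),
      (∀ j, π (L (b j)) = φ (π (b j))) → ∀ v, π (L v) = φ (π v) := by
    intro φ L hbase v
    have : πl.comp L = φ.toIntLinearMap.comp πl := b.ext hbase
    exact LinearMap.congr_fun this v
  -- the two lifts
  set M : (Fin n → ℤ) →ₗ[ℤ] (Fin n → ℤ) := b.constr ℤ (fun j => σ (h (π (b j)))) with hMdef
  set M' : (Fin n → ℤ) →ₗ[ℤ] (Fin n → ℤ) := b.constr ℤ (fun j => σ (h.symm (π (b j)))) with hM'def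
  have hM : ∀ v, π (M v) = h (π v) := by
    apply lift_aux h.toAddMonoidHom
    intro j
    rw [hMdef, b.constr_basis, hσ]
    rfl
  have hM' : ∀ v, π (M' v) = h.symm (π v) := by
    apply lift_aux h.symm.toAddMonoidHom
    intro j
    rw [hM'def, b.constr_basis, hσ]
    rfl
  -- matrices
  set A : Matrix (Fin n) (Fin n) ℤ := LinearMap.toMatrix b b M with hAdef
  set A' : Matrix (Fin n) (Fin n) ℤ := LinearMap.toMatrix b b M' with hA'def
  have hArepr : ∀ i j, b.repr (M (b j)) i = A i j := fun i j =>
    (LinearMap.toMatrix_apply b b M i j).symm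
  have hA'repr : ∀ i j, b.repr (M' (b j)) i = A' i j := fun i j =>
    (LinearMap.toMatrix_apply b b M' i j).symm
  -- basic K facts
  have hdbK : ∀ j, d j • b j ∈ K := by
    intro j
    rw [hmem]
    intro i
    rw [map_smul]
    by_cases hij : i = j
    · subst hij
      simp
    · simp [Module.Basis.repr_self, Finsupp.single_apply, Ne.symm hij]
  have hMK : ∀ x, x ∈ K → M x ∈ K := by
    intro x hx
    have : π x = 0 := hx
    show π (M x) = 0
    rw [hM, this, map_zero]
  have hM'K : ∀ x, x ∈ K → M' x ∈ K := by
    intro x hx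
    have : π x = 0 := hx
    show π (M' x) = 0
    rw [hM', this, map_zero]
  -- divisibility constraints
  have hA1 : ∀ i j, d i ∣ d j * A i j := by
    intro i j
    have := (hmem _).mp (hMK _ (hdbK j)) i
    rwa [map_smul, map_smul, Finsupp.smul_apply, hArepr, smul_eq_mul] at this
  have hA'1 : ∀ i j, d i ∣ d j * A' i j := by
    intro i j
    have := (hmem _).mp (hM'K _ (hdbK j)) i
    rwa [map_smul, map_smul, Finsupp.smul_apply, hA'repr, smul_eq_mul] at this
  have hA2 : ∀ i j, d i ∣ (A' * A) i j - (1 : Matrix (Fin n) (Fin n) ℤ) i j := by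
    intro i j
    have hxK : M' (M (b j)) - b j ∈ K := by
      show π _ = 0
      rw [map_sub, hM', hM, AddEquiv.symm_apply_apply, sub_self]
    have := (hmem _).mp hxK i
    have hrepr : b.repr (M' (M (b j)) - b j) i = (A' * A) i j - (1 : Matrix (Fin n) (Fin n) ℤ) i j := by
      rw [map_sub]
      have hcomp : b.repr (M' (M (b j))) i = (A' * A) i j := by
        have : A' * A = LinearMap.toMatrix b b (M' ∘ₗ M) := (LinearMap.toMatrix_comp b b b M' M).symm
        rw [this, LinearMap.toMatrix_apply]
        rfl
      rw [Finsupp.sub_apply, hcomp]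
      congr 1
      simp [Module.Basis.repr_self, Finsupp.single_apply, Matrix.one_apply, eq_comm]
    rwa [hrepr] at this
  -- d i divides N and is nonzero
  have hdN : ∀ i, d i ∣ (N : ℤ) := by
    intro i
    have hbiK : (N : ℤ) • b i ∈ K := by
      show π _ = 0
      rw [map_zsmul, natCast_zsmul]
      exact card_nsmul_eq_zero
    have := (hmem _).mp hbiK i
    rwa [map_smul, Finsupp.smul_apply, Module.Basis.repr_self, Finsupp.single_apply, if_pos rfl,
      smul_eq_mul, mul_one] at this
  have hdne : ∀ i, d i ≠ 0 := by
    intro i hzero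
    have := hdN i
    rw [hzero, zero_dvd_iff] at this
    exact hN0 (by exact_mod_cast this)
  -- coprime complements m i
  choose m hm1 hm2 using fun i => aux_coprime_part (d i).natAbs N hN0
  have hco : ∀ i, IsCoprime (d i) ((m i : ℤ)) := by
    intro i
    rw [Int.isCoprime_iff_gcd_eq_one]
    have : Int.gcd (d i) (m i) = Nat.gcd (d i).natAbs (m i) := by
      simp [Int.gcd]
    rw [this]
    exact hm1 i
  choose u v huv using fun i => hco i
  -- the correction matrix
  set C : Matrix (Fin n) (Fin n) ℤ :=
    fun i j => ((1 : Matrix (Fin n) (Fin n) ℤ) i j - A i j) * (u i * d i) with hCdef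
  have hCd : ∀ i j, d i ∣ C i j := fun i j => ⟨((1 : Matrix (Fin n) (Fin n) ℤ) i j - A i j) * u i, by rw [hCdef]; ring⟩
  have hCm : ∀ i j, (m i : ℤ) ∣ (A i j + C i j) - (1 : Matrix (Fin n) (Fin n) ℤ) i j := by
    intro i j
    refine ⟨-(((1 : Matrix (Fin n) (Fin n) ℤ) i j - A i j) * v i), ?_⟩
    have := huv i
    rw [hCdef]
    linear_combination ((1 : Matrix (Fin n) (Fin n) ℤ) i j - A i j) * this
  -- the lift
  set f : (Fin n → ℤ) →ₗ[ℤ] (Fin n → ℤ) := M + Matrix.toLin b b C with hfdef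
  have hCK : ∀ w, Matrix.toLin b b C w ∈ K := by
    intro w
    rw [hmem]
    intro i
    rw [Matrix.toLin_apply]
    rw [map_sum]
    rw [Finsupp.finset_sum_apply]
    apply Finset.dvd_sum
    intro j _
    rw [LinearEquiv.map_smul, Finsupp.smul_apply]
    by_cases hij : i = j
    · subst hij
      rw [Module.Basis.repr_self, Finsupp.single_apply, if_pos rfl, smul_eq_mul, mul_one]
      rw [Matrix.mulVec, dotProduct]
      apply Finset.dvd_sum
      intro k _
      exact Dvd.dvd.mul_right (hCd i k) _
    · rw [Module.Basis.repr_self, Finsupp.single_apply, if_neg (Ne.symm hij), smul_eq_mul, mul_zero]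
      exact dvd_zero _
  have hlift : ∀ w, π (f w) = h (π w) := by
    intro w
    rw [hfdef]
    have : π (M w + Matrix.toLin b b C w) = π (M w) + π (Matrix.toLin b b C w) := map_add π _ _
    have h0 : π (Matrix.toLin b b C w) = 0 := (hKzero _).mp (hCK w)
    rw [LinearMap.add_apply, this, h0, add_zero, hM]
  have hdet : LinearMap.det f = (A + C).det := by
    rw [← LinearMap.det_toMatrix b, hfdef, map_add, ← hAdef, LinearMap.toMatrix_toLin]
  refine ⟨f, hlift, ?_⟩
  rw [hdet, Int.isCoprime_iff_gcd_eq_one]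
  by_contra hne
  obtain ⟨p, hp, hpd⟩ := Nat.exists_prime_and_dvd hne
  have hp1 : (p : ℤ) ∣ (A + C).det := by
    rw [Int.natCast_dvd]
    exact hpd.trans (Nat.gcd_dvd_left _ _)
  have hp2 : p ∣ N := by
    have := hpd.trans (Nat.gcd_dvd_right _ _)
    simpa using this
  haveI : Fact p.Prime := ⟨hp⟩
  have hpZ : Prime (p : ℤ) := Nat.prime_iff_prime_int.mp hp
  set φZ : ℤ →+* ZMod p := Int.castRingHom (ZMod p) with hφZdef
  have hcast : ∀ x : ℤ, (p : ℤ) ∣ x → φZ x = 0 := fun x hx =>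
    (ZMod.intCast_zmod_eq_zero_iff_dvd x p).mpr hx
  set Ab : Matrix (Fin n) (Fin n) (ZMod p) := φZ.mapMatrix A with hAbdef
  set A'b : Matrix (Fin n) (Fin n) (ZMod p) := φZ.mapMatrix A' with hA'bdef
  set Bb : Matrix (Fin n) (Fin n) (ZMod p) := φZ.mapMatrix (A + C) with hBbdef
  have hdet0 : Bb.det = 0 := by
    rw [hBbdef, ← RingHom.map_det]
    exact hcast _ hp1
  have hone : ∀ i j : Fin n, φZ ((1 : Matrix (Fin n) (Fin n) ℤ) i j)
      = (if i = j then 1 else 0 : ZMod p) := by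
    intro i j
    rw [Matrix.one_apply]
    split_ifs <;> simp
  have hdtransfer : ∀ i, ¬ (p : ℤ) ∣ d i → (p : ℤ) ∣ (m i : ℤ) := by
    intro i hi
    have hnd : ¬ p ∣ (d i).natAbs := fun hc => hi (Int.natCast_dvd.mpr hc)
    exact_mod_cast Int.natCast_dvd_natCast.mpr (hm2 i p hp hp2 hnd)
  have ha : ∀ i j, ¬ (p : ℤ) ∣ d i → Bb i j = (if i = j then 1 else 0 : ZMod p) := by
    intro i j hi
    have hdvd : (p : ℤ) ∣ (A i j + C i j) - (1 : Matrix (Fin n) (Fin n) ℤ) i j :=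
      (hdtransfer i hi).trans (hCm i j)
    have h0 := hcast _ hdvd
    rw [map_sub] at h0
    have : Bb i j = φZ (A i j + C i j) := rfl
    rw [this, sub_eq_zero.mp h0, hone]
  have hb : ∀ i j, (p : ℤ) ∣ d i → Bb i j = Ab i j := by
    intro i j hi
    have hdvd : (p : ℤ) ∣ C i j := hi.trans (hCd i j)
    have : Bb i j = φZ (A i j) + φZ (C i j) := by
      show φZ ((A + C) i j) = _
      rw [Matrix.add_apply, map_add]
    rw [this, hcast _ hdvd, add_zero]
    rfl
  have hc : ∀ i j, (p : ℤ) ∣ d i → ¬ (p : ℤ) ∣ d j → Ab i j = 0 := by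
    intro i j hi hj
    have : (p : ℤ) ∣ d j * A i j := hi.trans (hA1 i j)
    rcases hpZ.dvd_mul.mp this with hcase | hcase
    · exact absurd hcase hj
    · exact hcast _ hcase
  have hc' : ∀ i j, (p : ℤ) ∣ d i → ¬ (p : ℤ) ∣ d j → A'b i j = 0 := by
    intro i j hi hj
    have : (p : ℤ) ∣ d j * A' i j := hi.trans (hA'1 i j)
    rcases hpZ.dvd_mul.mp this with hcase | hcase
    · exact absurd hcase hj
    · exact hcast _ hcase
  have hd2 : ∀ i j, (p : ℤ) ∣ d i → (A'b * Ab) i j = (if i = j then 1 else 0 : ZMod p) := by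
    intro i j hi
    have hdvd : (p : ℤ) ∣ (A' * A) i j - (1 : Matrix (Fin n) (Fin n) ℤ) i j :=
      hi.trans (hA2 i j)
    have h0 := hcast _ hdvd
    rw [map_sub] at h0
    have hmul : (A'b * Ab) i j = φZ ((A' * A) i j) := by
      rw [hAbdef, hA'bdef, ← map_mul]
      rfl
    rw [hmul, sub_eq_zero.mp h0, hone]
  -- injectivity of Bb
  have hinj : ∀ w : Fin n → ZMod p, Bb.mulVec w = 0 → w = 0 := by
    intro w hw
    have hrow : ∀ i, ∑ j, Bb i j * w j = 0 := by
      intro i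
      have := congrFun hw i
      rwa [Matrix.mulVec, dotProduct] at this
    have hw1 : ∀ i, ¬ (p : ℤ) ∣ d i → w i = 0 := by
      intro i hi
      have h0 := hrow i
      rw [Finset.sum_congr rfl (fun j _ => by rw [ha i j hi])] at h0
      rw [← h0]
      simp [ite_mul]
    have hw2 : ∀ k, (p : ℤ) ∣ d k → (Ab.mulVec w) k = 0 := by
      intro k hk
      rw [Matrix.mulVec, dotProduct, ← hrow k]
      exact Finset.sum_congr rfl fun j _ => by rw [hb k j hk]
    funext i
    simp only [Pi.zero_apply]
    by_cases hi : (p : ℤ) ∣ d i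
    · have e1 : ((A'b * Ab).mulVec w) i = w i := by
        rw [Matrix.mulVec, dotProduct]
        rw [Finset.sum_congr rfl (fun j _ => by rw [hd2 i j hi])]
        simp [ite_mul]
      have e2 : (A'b.mulVec (Ab.mulVec w)) i = 0 := by
        rw [Matrix.mulVec, dotProduct]
        apply Finset.sum_eq_zero
        intro k _
        by_cases hk : (p : ℤ) ∣ d k
        · rw [hw2 k hk, mul_zero]
        · rw [hc' i k hi hk, zero_mul]
      rw [← e1, ← Matrix.mulVec_mulVec, e2]
    · exact hw1 i hi
  obtain ⟨v0, hv0ne, hv0⟩ := Matrix.exists_mulVec_eq_zero_iff.mpr hdet0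
  exact hv0ne (hinj v0 hv0)
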